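/- Let m ∈ ℕ, λ ≥ 0, let F : [0,∞) → (m × m real matrices) and g : [0,∞) → ℝ^m (row vectors) be continuous, with every component of g(t) nonnegative for every t ≥ 0, and suppose there is a continuous M : [0,∞) → ℝ such that every entry of F(t) + M(t)·1 is nonnegative for every t ≥ 0. Let A : [0,∞) → (m × m real matrices) be differentiable with A'(t) = F(t)·A(t), A(0) = 1, and A(t) invertible for every t ≥ 0. Assume the improper integral I(T) := lim_{S→∞} ∫_T^S g(t)·A(t) dt exists in ℝ^m for every T ≥ 0, and let ψ : [0,∞) → ℝ^m be defined by ψ(T) := λ·I(T)·A(T)^{-1}. Then every component of ψ(T) is nonnegative for every T ≥ 0. -/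

import Mathlib

open Filter Topology

lemma metzler_nonneg_aux (m : ℕ) (F : ℝ → Matrix (Fin m) (Fin m) ℝ) (M : ℝ → ℝ)
    (hFc : ∀ i j, ContinuousOn (fun t => F t i j) (Set.Ici 0))
    (hMc : ContinuousOn M (Set.Ici 0))
    (hMetzler : ∀ t ≥ (0:ℝ), ∀ i j,
      0 ≤ (F t + M t • (1 : Matrix (Fin m) (Fin m) ℝ)) i j)
    (y : ℝ → Fin m → ℝ) (T S : ℝ) (hT : 0 ≤ T) (hTS : T ≤ S)
    (hy : ∀ t ≥ (0:ℝ), ∀ i,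
      HasDerivWithinAt (fun s => y s i) (∑ l, F t i l * y t l) (Set.Ici 0) t)
    (hyT : ∀ i, 0 ≤ y T i) :
    ∀ t ∈ Set.Icc T S, ∀ i, 0 ≤ y t i := by
  have hsub : Set.Icc T S ⊆ Set.Ici (0:ℝ) := fun t ht => le_trans hT ht.1
  have hycont : ∀ i, ContinuousOn (fun t => y t i) (Set.Ici 0) :=
    fun i t ht => (hy t ht i).continuousWithinAt
  -- bounds on the coefficients
  obtain ⟨C₁, hC₁⟩ := isCompact_Icc.exists_bound_of_continuousOn (hMc.mono hsub)
  have hCc : ContinuousOn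
      (fun t => fun p : Fin m × Fin m =>
        (F t + M t • (1 : Matrix (Fin m) (Fin m) ℝ)) p.1 p.2) (Set.Icc T S) := by
    apply continuousOn_pi.2
    intro p
    have h : (fun t => (F t + M t • (1 : Matrix (Fin m) (Fin m) ℝ)) p.1 p.2)
        = fun t => F t p.1 p.2 + M t * (1 : Matrix (Fin m) (Fin m) ℝ) p.1 p.2 := by
      funext t; simp [Matrix.add_apply]
    rw [h]
    exact ((hFc p.1 p.2).mono hsub).add ((hMc.mono hsub).mul continuousOn_const)
  obtain ⟨C₂, hC₂⟩ := isCompact_Icc.exists_bound_of_continuousOn hCc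
  set C₀ : ℝ := max (max C₁ C₂) 0 with hC₀def
  have hC₀0 : 0 ≤ C₀ := le_max_right _ _
  have hMbound : ∀ t ∈ Set.Icc T S, |M t| ≤ C₀ := by
    intro t ht
    have := hC₁ t ht
    rw [Real.norm_eq_abs] at this
    exact le_trans this (le_trans (le_max_left _ _) (le_max_left _ _))
  have hCbound : ∀ t ∈ Set.Icc T S, ∀ i j,
      (F t + M t • (1 : Matrix (Fin m) (Fin m) ℝ)) i j ≤ C₀ := by
    intro t ht i j
    have h1 := norm_le_pi_norm
      (fun p : Fin m × Fin m => (F t + M t • (1 : Matrix (Fin m) (Fin m) ℝ)) p.1 p.2) (i, j)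
    have h2 := hC₂ t ht
    calc (F t + M t • (1 : Matrix (Fin m) (Fin m) ℝ)) i j
        ≤ |(F t + M t • (1 : Matrix (Fin m) (Fin m) ℝ)) i j| := le_abs_self _
      _ ≤ C₂ := by
          rw [← Real.norm_eq_abs]
          exact le_trans h1 h2
      _ ≤ C₀ := le_trans (le_max_right _ _) (le_max_left _ _)
  set K : ℝ := (m + 1) * C₀ with hKdef
  set f : ℝ → ℝ := fun t => ∑ i, max (-(y t i)) 0 with hfdef
  have hf0 : ∀ t, 0 ≤ f t := fun t => Finset.sum_nonneg fun i _ => le_max_right _ _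
  have hfc : ContinuousOn f (Set.Icc T S) :=
    continuousOn_finset_sum _ fun i _ => ((((hycont i).mono hsub).neg).sup continuousOn_const)
  have key : ∀ t ∈ Set.Icc T S, f t ≤ gronwallBound 0 K 0 (t - T) := by
    refine le_gronwallBound_of_liminf_deriv_right_le (f' := fun x => K * f x) hfc ?_ ?_ ?_
    · -- slope condition
      intro x hx r hr
      have hx0 : (0:ℝ) ≤ x := le_trans hT hx.1
      have hxIcc : x ∈ Set.Icc T S := ⟨hx.1, le_of_lt hx.2⟩
      set ε : ℝ := (r - K * f x) / (m + 1) with hεdef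
      have hεpos : 0 < ε := div_pos (sub_pos.2 hr) (by positivity)
      set d : Fin m → ℝ := fun i => ∑ l, F x i l * y x l with hddef
      have hslope : ∀ i, Tendsto (fun z => (z - x)⁻¹ * (y z i - y x i)) (𝓝[>] x) (𝓝 (d i)) := by
        intro i
        have h1 := hasDerivWithinAt_iff_tendsto_slope.1 (hy x hx0 i)
        have h2 : 𝓝[>] x ≤ 𝓝[Set.Ici (0:ℝ) \ {x}] x :=
          nhdsWithin_mono _ (fun z hz => ⟨le_trans hx0 (le_of_lt hz), hz.ne'⟩)
        have h3 := h1.mono_left h2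
        refine h3.congr (fun z => ?_)
        rw [slope_def_field, div_eq_inv_mul]
      have hper : ∀ i, ∀ᶠ z in 𝓝[>] x,
          (z - x)⁻¹ * (max (-(y z i)) 0 - max (-(y x i)) 0)
            < (if 0 < y x i then 0 else max (-(d i)) 0) + ε := by
        intro i
        by_cases hyi : 0 < y x i
        · simp only [if_pos hyi]
          have hcont' : Tendsto (fun z => y z i) (𝓝[>] x) (𝓝 (y x i)) :=
            ((hycont i x hx0).mono_left
              (nhdsWithin_mono _ (fun z hz => le_trans hx0 (le_of_lt hz))))
          filter_upwards [hcont'.eventually (lt_mem_nhds hyi)] with z hz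
          rw [max_eq_right (neg_nonpos.2 hz.le), max_eq_right (neg_nonpos.2 hyi.le)]
          simpa using hεpos
        · push_neg at hyi
          simp only [if_neg (not_lt.2 hyi)]
          have hev1 : ∀ᶠ z in 𝓝[>] x, d i - ε < (z - x)⁻¹ * (y z i - y x i) :=
            (hslope i).eventually (lt_mem_nhds (by linarith : d i - ε < d i))
          filter_upwards [hev1, self_mem_nhdsWithin] with z hz1 hz2
          have hzx : (0:ℝ) < z - x := sub_pos.2 hz2
          rw [max_eq_left (neg_nonneg.2 hyi)]
          have e1 : max (-(y z i)) 0 - -(y x i) = max (y x i - y z i) (y x i) := by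
            rcases le_total (-(y z i)) 0 with h | h
            · rw [max_eq_right h, max_eq_right (by linarith : y x i - y z i ≤ y x i)]; ring
            · rw [max_eq_left h, max_eq_left (by linarith : y x i ≤ y x i - y z i)]; ring
          rw [e1, mul_max_of_nonneg _ _ (inv_nonneg.2 hzx.le)]
          apply max_lt
          · have e2 : (z - x)⁻¹ * (y x i - y z i) = -((z - x)⁻¹ * (y z i - y x i)) := by ring
            rw [e2]
            have h4 := le_max_left (-(d i)) (0:ℝ)
            linarith
          · have h5 : (z - x)⁻¹ * y x i ≤ 0 :=
              mul_nonpos_of_nonneg_of_nonpos (inv_nonneg.2 hzx.le) hyi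
            have h6 : 0 < max (-(d i)) 0 + ε := add_pos_of_nonneg_of_pos (le_max_right _ _) hεpos
            linarith
      have hsumbase : ∑ i, (if 0 < y x i then (0:ℝ) else max (-(d i)) 0) ≤ K * f x := by
        have hterm : ∀ i, (if 0 < y x i then (0:ℝ) else max (-(d i)) 0)
            ≤ C₀ * f x + C₀ * max (-(y x i)) 0 := by
          intro i
          have hnnRHS : 0 ≤ C₀ * f x + C₀ * max (-(y x i)) 0 :=
            add_nonneg (mul_nonneg hC₀0 (hf0 x)) (mul_nonneg hC₀0 (le_max_right _ _))
          by_cases h : 0 < y x i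
          · simpa [if_pos h] using hnnRHS
          · push_neg at h
            rw [if_neg (not_lt.2 h)]
            refine max_le ?_ hnnRHS
            -- -(d i) ≤ C₀ * f x + C₀ * max (-(y x i)) 0
            have e1 : ∑ l, (F x + M x • (1 : Matrix (Fin m) (Fin m) ℝ)) i l * (-(y x l))
                = (∑ l, F x i l * (-(y x l))) + M x * (-(y x i)) := by
              simp only [Matrix.add_apply, Matrix.smul_apply, Matrix.one_apply, smul_eq_mul,
                add_mul, mul_ite, mul_one, mul_zero, ite_mul, zero_mul]
              rw [Finset.sum_add_distrib]
              congr 1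
              simp
            have e2 : -(d i) = ∑ l, F x i l * (-(y x l)) := by
              simp only [hddef, mul_neg, ← Finset.sum_neg_distrib]
            have hbnd : ∑ l, (F x + M x • (1 : Matrix (Fin m) (Fin m) ℝ)) i l * (-(y x l))
                ≤ C₀ * f x := by
              rw [hfdef, Finset.mul_sum]
              refine Finset.sum_le_sum fun l _ => ?_
              calc (F x + M x • (1 : Matrix (Fin m) (Fin m) ℝ)) i l * (-(y x l))
                  ≤ (F x + M x • (1 : Matrix (Fin m) (Fin m) ℝ)) i l * max (-(y x l)) 0 :=
                    mul_le_mul_of_nonneg_left (le_max_left _ _) (hMetzler x hx0 i l)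
                _ ≤ C₀ * max (-(y x l)) 0 :=
                    mul_le_mul_of_nonneg_right (hCbound x hxIcc i l) (le_max_right _ _)
            have hM2 : M x * y x i ≤ C₀ * max (-(y x i)) 0 := by
              have h7 : -(y x i) = max (-(y x i)) 0 := (max_eq_left (neg_nonneg.2 h)).symm
              have h8 : M x * y x i = (-(M x)) * (-(y x i)) := by ring
              rw [h8, ← h7]
              calc (-(M x)) * (-(y x i)) ≤ |M x| * (-(y x i)) :=
                    mul_le_mul_of_nonneg_right (neg_le_abs _) (neg_nonneg.2 h)
                _ ≤ C₀ * (-(y x i)) :=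
                    mul_le_mul_of_nonneg_right (hMbound x hxIcc) (neg_nonneg.2 h)
            have e3 : -(d i) = (∑ l, (F x + M x • (1 : Matrix (Fin m) (Fin m) ℝ)) i l * (-(y x l)))
                + M x * y x i := by
              rw [e1, e2]; ring
            rw [e3]
            exact add_le_add hbnd hM2
        calc ∑ i, (if 0 < y x i then (0:ℝ) else max (-(d i)) 0)
            ≤ ∑ i : Fin m, (C₀ * f x + C₀ * max (-(y x i)) 0) :=
              Finset.sum_le_sum fun i _ => hterm i
          _ = (m : ℝ) * (C₀ * f x) + C₀ * f x := by
              rw [Finset.sum_add_distrib, Finset.sum_const, ← Finset.mul_sum]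
              simp [hfdef, Finset.card_univ, nsmul_eq_mul]
          _ = K * f x := by rw [hKdef]; ring
      apply Filter.Eventually.frequently
      filter_upwards [Filter.eventually_all.2 hper, self_mem_nhdsWithin] with z hz hz2
      have hzx : (0:ℝ) < z - x := sub_pos.2 hz2
      have hexpand : (z - x)⁻¹ * (f z - f x)
          = ∑ i, (z - x)⁻¹ * (max (-(y z i)) 0 - max (-(y x i)) 0) := by
        rw [hfdef, ← Finset.sum_sub_distrib, ← Finset.mul_sum]
      rw [hexpand]
      have hmε : ((m:ℝ) + 1) * ε = r - K * f x := by
        rw [hεdef]; field_simp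
      calc ∑ i, (z - x)⁻¹ * (max (-(y z i)) 0 - max (-(y x i)) 0)
          ≤ ∑ i, ((if 0 < y x i then (0:ℝ) else max (-(d i)) 0) + ε) :=
            Finset.sum_le_sum fun i _ => le_of_lt (hz i)
        _ = (∑ i, (if 0 < y x i then (0:ℝ) else max (-(d i)) 0)) + (m:ℝ) * ε := by
            rw [Finset.sum_add_distrib, Finset.sum_const, Finset.card_univ]
            simp [nsmul_eq_mul]
        _ ≤ K * f x + (m:ℝ) * ε := by linarith
        _ < r := by linarith
    · exact Finset.sum_nonpos fun i _ => max_le (neg_nonpos.2 (hyT i)) le_rfl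
    · intro x hx; simp
  intro t ht i
  have h1 := key t ht
  rw [gronwallBound_ε0_δ0] at h1
  have h2 : max (-(y t i)) 0 ≤ f t :=
    Finset.single_le_sum (f := fun j => max (-(y t j)) 0) (fun j _ => le_max_right _ _)
      (Finset.mem_univ i)
  have h3 := le_max_left (-(y t i)) (0:ℝ)
  linarith

/-- Main assertion of Proposition 8 ('mon') of the paper, in abstract form: if
`λ ≥ 0`, `g(t)` is componentwise nonnegative, `F(t) + M(t)·1` is entrywise
nonnegative (Metzler-type condition), `A` is the (invertible) fundamental matrix
of `x' = F(t)x`, the improper integral `I(T) = ∫_T^∞ g·A` converges for every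
`T ≥ 0`, and `ψ(T) = λ·I(T)·A(T)⁻¹` is the adjoint variable given by the
Aseev–Kryazhimskii Cauchy-type formula, then `ψ(T)` is componentwise nonnegative
for every `T ≥ 0`. -/
theorem stmt_16 (m : ℕ) (lam : ℝ) (hlam : 0 ≤ lam)
    (F : ℝ → Matrix (Fin m) (Fin m) ℝ) (g : ℝ → Fin m → ℝ) (M : ℝ → ℝ)
    (hFc : ∀ i j, ContinuousOn (fun t => F t i j) (Set.Ici 0))
    (hgc : ∀ i, ContinuousOn (fun t => g t i) (Set.Ici 0))
    (hMc : ContinuousOn M (Set.Ici 0))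
    (hg0 : ∀ t ≥ (0:ℝ), ∀ i, 0 ≤ g t i)
    (hMetzler : ∀ t ≥ (0:ℝ), ∀ i j,
      0 ≤ (F t + M t • (1 : Matrix (Fin m) (Fin m) ℝ)) i j)
    (A : ℝ → Matrix (Fin m) (Fin m) ℝ)
    (hA : ∀ t ≥ (0:ℝ), ∀ i j,
      HasDerivWithinAt (fun s => A s i j) ((F t * A t) i j) (Set.Ici 0) t)
    (hA0 : A 0 = 1)
    (hAinv : ∀ t ≥ (0:ℝ), IsUnit (A t))
    (I : ℝ → Fin m → ℝ)
    (hI : ∀ T ≥ (0:ℝ),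
      Tendsto (fun S => ∫ t in T..S, Matrix.vecMul (g t) (A t)) atTop (𝓝 (I T)))
    (ψ : ℝ → Fin m → ℝ)
    (hψdef : ∀ T : ℝ, ψ T = lam • Matrix.vecMul (I T) (A T)⁻¹) :
    ∀ T ≥ (0:ℝ), ∀ i, 0 ≤ ψ T i := by
  intro T hT
  have hdet : IsUnit (A T).det := (Matrix.isUnit_iff_isUnit_det _).1 (hAinv T hT)
  have hATinv : A T * (A T)⁻¹ = 1 := Matrix.mul_nonsing_inv _ hdet
  have hAcont : ∀ a b, ContinuousOn (fun t => A t a b) (Set.Ici 0) :=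
    fun a b t ht => (hA t ht a b).continuousWithinAt
  -- Step 1: the transition matrix `A t * (A T)⁻¹` is entrywise nonnegative for `t ≥ T`.
  have hB : ∀ t, T ≤ t → ∀ a b, 0 ≤ (A t * (A T)⁻¹) a b := by
    intro t htT a b
    refine metzler_nonneg_aux m F M hFc hMc hMetzler
      (fun s a' => (A s * (A T)⁻¹) a' b) T t hT htT ?_ ?_ t ⟨htT, le_refl t⟩ a
    · intro s hs i
      have h1 : HasDerivWithinAt (fun u => ∑ k, A u i k * (A T)⁻¹ k b)
          (∑ k, (F s * A s) i k * (A T)⁻¹ k b) (Set.Ici 0) s :=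
        HasDerivWithinAt.fun_sum (fun k _ => (hA s hs i k).mul_const _)
      have h2 : (fun u => (A u * (A T)⁻¹) i b) = fun u => ∑ k, A u i k * (A T)⁻¹ k b := by
        funext u; simp [Matrix.mul_apply]
      have h3 : ∑ k, (F s * A s) i k * (A T)⁻¹ k b
          = ∑ l, F s i l * (A s * (A T)⁻¹) l b := by
        simp only [Matrix.mul_apply, Finset.sum_mul, Finset.mul_sum, mul_assoc]
        exact Finset.sum_comm
      rw [show (fun s_1 => (A s_1 * (A T)⁻¹) i b) = fun u => ∑ k, A u i k * (A T)⁻¹ k b from h2,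
        ← h3]
      exact h1
    · intro i
      show 0 ≤ (A T * (A T)⁻¹) i b
      rw [hATinv, Matrix.one_apply]
      split_ifs <;> norm_num
  intro i
  set c : Fin m → ℝ := fun k => (A T)⁻¹ k i with hc
  have hlim : Tendsto (fun S => ∑ k, (∫ t in T..S, Matrix.vecMul (g t) (A t)) k * c k)
      atTop (𝓝 (∑ k, I T k * c k)) := by
    apply tendsto_finset_sum
    intro k _
    exact (((continuous_apply k).tendsto _).comp (hI T hT)).mul_const _
  have hnn : ∀ᶠ S in atTop,
      0 ≤ ∑ k, (∫ t in T..S, Matrix.vecMul (g t) (A t)) k * c k := by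
    filter_upwards [Filter.Ici_mem_atTop T] with S hS
    have hsub2 : Set.uIcc T S ⊆ Set.Ici (0:ℝ) := by
      rw [Set.uIcc_of_le hS]; exact fun t ht => le_trans hT ht.1
    have hwc : ContinuousOn (fun t => Matrix.vecMul (g t) (A t)) (Set.uIcc T S) := by
      apply continuousOn_pi.2
      intro k
      have h : (fun t => Matrix.vecMul (g t) (A t) k) = fun t => ∑ j, g t j * A t j k := by
        funext t; simp [Matrix.vecMul, dotProduct]
      rw [h]
      exact continuousOn_finset_sum _ fun j _ =>
        (((hgc j).mono hsub2).mul ((hAcont j k).mono hsub2))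
    have hint : IntervalIntegrable (fun t => Matrix.vecMul (g t) (A t))
        MeasureTheory.volume T S := hwc.intervalIntegrable
    have hcomp : ∀ k, (∫ t in T..S, Matrix.vecMul (g t) (A t)) k
        = ∫ t in T..S, Matrix.vecMul (g t) (A t) k :=
      fun k => ((ContinuousLinearMap.proj (R := ℝ) (φ := fun _ : Fin m => ℝ)
        k).intervalIntegral_comp_comm hint).symm
    have hintk : ∀ k, IntervalIntegrable (fun t => Matrix.vecMul (g t) (A t) k * c k)
        MeasureTheory.volume T S :=
      fun k => (((continuous_apply k).comp_continuousOn hwc).mul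
        continuousOn_const).intervalIntegrable
    have e1 : ∑ k, (∫ t in T..S, Matrix.vecMul (g t) (A t)) k * c k
        = ∫ t in T..S, ∑ k, Matrix.vecMul (g t) (A t) k * c k := by
      rw [Finset.sum_congr rfl (fun k _ => by
        rw [hcomp k, ← intervalIntegral.integral_mul_const])]
      exact (intervalIntegral.integral_finset_sum (fun k _ => hintk k)).symm
    rw [e1]
    apply intervalIntegral.integral_nonneg hS
    intro t ht
    have htT : T ≤ t := ht.1
    have ht0 : (0:ℝ) ≤ t := le_trans hT htT
    have e2 : ∑ k, Matrix.vecMul (g t) (A t) k * c k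
        = ∑ j, g t j * (A t * (A T)⁻¹) j i := by
      simp only [Matrix.vecMul, dotProduct, Matrix.mul_apply, Finset.sum_mul,
        Finset.mul_sum, mul_assoc]
      exact Finset.sum_comm
    rw [e2]
    exact Finset.sum_nonneg fun j _ => mul_nonneg (hg0 t ht0 j) (hB t htT j i)
  have hfinal : 0 ≤ ∑ k, I T k * c k := ge_of_tendsto hlim hnn
  rw [hψdef]
  simp only [Pi.smul_apply, smul_eq_mul]
  apply mul_nonneg hlam
  have e3 : Matrix.vecMul (I T) (A T)⁻¹ i = ∑ k, I T k * c k := by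
    simp [Matrix.vecMul, dotProduct, hc]
  rw [e3]
  exact hfinal
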